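/- In the potential setup, let 0 < β < 1, let f be admissible, and set w = w(f), g = g(f). Let g̃ ∈ ℝ^{E∪Ê} satisfy |g̃_e − g_e| ≤ (β/10)·w_e for all e, let w̃ ∈ ℝ^{E∪Ê} be entrywise positive with w̃_e ≈_2 w_e for all e, and let Δ ∈ ℝ^{E∪Ê} be nonzero with g̃^⊤Δ ≤ −β·‖W̃Δ‖₁. Let η > 0 be chosen so that η·‖W̃Δ‖₁ = β/(100p), and assume additionally that ℓ^⊤(f + ηΔ) > F*. Then f + ηΔ is admissible and Φ(f + ηΔ) ≤ Φ(f) − β²/(10⁴·p). -/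

import Mathlib

open Sum

/-- The barrier `V_p`: `V_p(x) = x^{-p}/p` for `x ≤ 1` and `V_p(x) = 1/p - log x` for `x ≥ 1`. -/
noncomputable def barrierV (p : ℕ) (x : ℝ) : ℝ :=
  if x ≤ 1 then x ^ (-(p : ℤ)) / p else 1 / p - Real.log x

/-- The weight function `W_p = -V_p'`: `W_p(x) = x^{-(p+1)}` for `x ≤ 1`, `W_p(x) = 1/x` for `x ≥ 1`. -/
noncomputable def barrierW (p : ℕ) (x : ℝ) : ℝ :=
  if x ≤ 1 then x ^ (-(p : ℤ) - 1) else 1 / x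

/-- The weights `w(f)`: `w(f)_e = 1/(f_e + δ_e)` for `e ∈ E`, `w(f)_e = W_p(f_e)` for `e ∈ Ehat`. -/
noncomputable def weight {E Ehat : Type*} (p : ℕ) (δ : E → ℝ) (f : E ⊕ Ehat → ℝ) : E ⊕ Ehat → ℝ :=
  Sum.elim (fun e => 1 / (f (inl e) + δ e)) (fun e => barrierW p (f (inr e)))

/-- The potential `Φ(f) = 10m·log(ℓᵀf - F*) - ∑_{e∈E} log(f_e + δ_e) + ∑_{e∈Ehat} V_p(f_e)`. -/
noncomputable def pot {E Ehat : Type*} [Fintype E] [Fintype Ehat] (p : ℕ) (ℓ : E ⊕ Ehat → ℝ)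
    (δ : E → ℝ) (m Fstar : ℝ) (f : E ⊕ Ehat → ℝ) : ℝ :=
  10 * m * Real.log (∑ e, ℓ e * f e - Fstar)
    - ∑ e : E, Real.log (f (inl e) + δ e)
    + ∑ e : Ehat, barrierV p (f (inr e))

/-- The gradient `g(f) = (10m/(ℓᵀf - F*))·ℓ - w(f)`. -/
noncomputable def grad {E Ehat : Type*} [Fintype E] [Fintype Ehat] (p : ℕ) (ℓ : E ⊕ Ehat → ℝ)
    (δ : E → ℝ) (m Fstar : ℝ) (f : E ⊕ Ehat → ℝ) : E ⊕ Ehat → ℝ :=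
  fun e => 10 * m / (∑ e', ℓ e' * f e' - Fstar) * ℓ e - weight p δ f e

lemma barrierV_of_le (p : ℕ) {x : ℝ} (h : x ≤ 1) : barrierV p x = (x^p)⁻¹/p := by
  rw [barrierV, if_pos h, zpow_neg, zpow_natCast]

lemma barrierV_of_gt (p : ℕ) {x : ℝ} (h : ¬ x ≤ 1) : barrierV p x = 1/p - Real.log x := by
  rw [barrierV, if_neg h]

lemma barrierW_of_le (p : ℕ) {x : ℝ} (h : x ≤ 1) : barrierW p x = (x^(p+1))⁻¹ := by
  rw [barrierW, if_pos h]
  have : (-(p:ℤ) - 1) = -((p+1 : ℕ) : ℤ) := by push_cast; ring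
  rw [this, zpow_neg, zpow_natCast]

lemma barrierW_of_gt (p : ℕ) {x : ℝ} (h : ¬ x ≤ 1) : barrierW p x = 1/x := by
  rw [barrierW, if_neg h]

lemma barrierW_pos (p : ℕ) {x : ℝ} (hx : 0 < x) : 0 < barrierW p x := by
  rcases le_or_gt x 1 with h | h
  · rw [barrierW_of_le p h]; positivity
  · rw [barrierW_of_gt p (not_le.mpr h)]; positivity

lemma inv_le_barrierW (p : ℕ) {x : ℝ} (hx : 0 < x) : x⁻¹ ≤ barrierW p x := by
  rcases le_or_gt x 1 with h | h
  · rw [barrierW_of_le p h]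
    have h1 : x^(p+1) ≤ x^1 := pow_le_pow_of_le_one hx.le h (by omega)
    rw [pow_one] at h1
    exact inv_anti₀ (by positivity) h1
  · rw [barrierW_of_gt p (not_le.mpr h), one_div]

lemma barrierV_le (p : ℕ) (hp : 1 ≤ p) {y : ℝ} (hy : 0 < y) :
    barrierV p y ≤ (y^p)⁻¹/p := by
  rcases le_or_gt y 1 with h | h
  · rw [barrierV_of_le p h]
  · rw [barrierV_of_gt p (not_le.mpr h)]
    have hp0 : (0:ℝ) < p := by exact_mod_cast Nat.pos_of_ne_zero (by omega)
    have hyp : (0:ℝ) < y^p := by positivity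
    have hl := Real.log_le_sub_one_of_pos (inv_pos.mpr hyp)
    rw [Real.log_inv, Real.log_pow] at hl
    -- hl : -((p:ℝ) * Real.log y) ≤ (y^p)⁻¹ - 1
    have h2 : (1 - (y^p)⁻¹)/p ≤ ((p:ℝ) * Real.log y)/p := by gcongr ?_ / p; linarith
    rw [mul_div_cancel_left₀ _ (ne_of_gt hp0), sub_div] at h2
    linarith

lemma log_aux {u : ℝ} (hu : -(1/2) ≤ u) : u - Real.log (1+u) ≤ 2*u^2 := by
  have h1 : (0:ℝ) < 1 + u := by linarith
  have h2 := Real.log_le_sub_one_of_pos (inv_pos.mpr h1)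
  rw [Real.log_inv] at h2
  have h3 : (1+u) * (1+u)⁻¹ = 1 := mul_inv_cancel₀ (ne_of_gt h1)
  nlinarith [h2, h3, h1, mul_nonneg (sq_nonneg u) (show (0:ℝ) ≤ 1+2*u by linarith)]

lemma bernoulli_inv (p : ℕ) {u : ℝ} (hu : -1 < u) (h : |(p:ℝ)*u| ≤ 1/10) :
    ((1+u)^p)⁻¹ ≤ 1 - (p:ℝ)*u + 2*((p:ℝ)*u)^2 := by
  have h1 : (0:ℝ) < 1 + u := by linarith
  have hP : (0:ℝ) < (1+u)^p := by positivity
  have hB : 1 + (p:ℝ)*u ≤ (1+u)^p := by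
    have := one_add_mul_le_pow (show (-2:ℝ) ≤ u by linarith) p
    linarith
  obtain ⟨ha, hb⟩ := abs_le.mp h
  have hA : (0:ℝ) < 1 - (p:ℝ)*u + 2*((p:ℝ)*u)^2 := by nlinarith
  rw [inv_le_iff_one_le_mul₀ hP]
  nlinarith [mul_le_mul_of_nonneg_left hB hA.le]

lemma phi_bound (p : ℕ) (hp : 1 ≤ p) {y : ℝ} (hy : 0 < y) (hy1 : y ≤ 1)
    (hsm : (p:ℝ)*(1-y) ≤ 1/10) :
    (y^p)⁻¹/p - 1/p + Real.log y ≤ 2*(p:ℝ)*(1-y)^2 := by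
  have hp0 : (0:ℝ) < p := by exact_mod_cast Nat.pos_of_ne_zero (by omega)
  set ε := 1 - y with hε
  have hε0 : 0 ≤ ε := by simp [hε]; linarith
  have hε1 : ε < 1 := by simp [hε]; linarith
  have hlog : Real.log y ≤ -ε := by
    have := Real.log_le_sub_one_of_pos hy; simp [hε]; linarith
  have hpow : (y^p)⁻¹ ≤ 1 + (p:ℝ)*ε + 2*((p:ℝ)*ε)^2 := by
    have h1 : y = 1 + (-ε) := by simp [hε]
    have h2 := bernoulli_inv p (u := -ε) (by linarith) (by
      rw [abs_of_nonpos (by nlinarith)]; nlinarith)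
    rw [h1]
    nlinarith [h2]
  have hdiv : (y^p)⁻¹/p ≤ (1 + (p:ℝ)*ε + 2*((p:ℝ)*ε)^2)/p := by gcongr
  have heq : (1 + (p:ℝ)*ε + 2*((p:ℝ)*ε)^2)/p = 1/p + ε + 2*(p:ℝ)*ε^2 := by
    field_simp
  nlinarith [hdiv, heq, hlog]

set_option maxHeartbeats 1600000 in
lemma barrier_step (p : ℕ) (hp : 2 ≤ p) {x t : ℝ} (hx : 0 < x)
    (hsm : barrierW p x * |t| ≤ 1/(50*(p:ℝ))) :
    0 < x + t ∧
    barrierV p (x+t) ≤ barrierV p x - barrierW p x * t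
      + 4*((p:ℝ)+1)*(barrierW p x * t)^2 := by
  have hp2 : (2:ℝ) ≤ (p:ℝ) := by exact_mod_cast hp
  have hp0 : (0:ℝ) < p := by linarith
  have hp1 : (1:ℝ) ≤ p := by linarith
  have hc : 1/(50*(p:ℝ)) ≤ 1/100 := by
    rw [div_le_div_iff₀ (by linarith) (by norm_num)]; linarith
  have htx : |t| * x⁻¹ ≤ 1/(50*(p:ℝ)) := by
    calc |t| * x⁻¹ = x⁻¹ * |t| := by ring
    _ ≤ barrierW p x * |t| := by
        exact mul_le_mul_of_nonneg_right (inv_le_barrierW p hx) (abs_nonneg t)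
    _ ≤ _ := hsm
  have ht : |t| ≤ x/100 := by
    have h' : |t|/x ≤ 1/100 := by rw [div_eq_mul_inv]; exact le_trans htx hc
    rw [div_le_div_iff₀ hx (by norm_num : (0:ℝ) < 100)] at h'
    linarith
  have habs := abs_le.mp ht
  have hxt : 0 < x + t := by linarith
  refine ⟨hxt, ?_⟩
  have ht50 : |t| ≤ x/(50*(p:ℝ)) := by
    have h' : |t|/x ≤ 1/(50*(p:ℝ)) := by rw [div_eq_mul_inv]; exact htx
    rw [div_le_div_iff₀ hx (by positivity : (0:ℝ) < 50*(p:ℝ))] at h'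
    rw [le_div_iff₀ (by positivity : (0:ℝ) < 50*(p:ℝ))]
    linarith
  obtain ⟨u, hu⟩ : ∃ u:ℝ, u = t/x := ⟨_, rfl⟩
  have htu : t = u * x := by rw [hu]; field_simp
  have hut : |u| ≤ 1/(50*(p:ℝ)) := by
    rw [hu, abs_div, abs_of_pos hx, div_eq_mul_inv]; exact htx
  have hu100 : |u| ≤ 1/100 := le_trans hut hc
  have hu100' := abs_le.mp hu100
  have hxtu : x + t = x * (1 + u) := by rw [htu]; ring
  have h1u : (0:ℝ) < 1 + u := by linarith [hu100'.1]
  rcases le_or_gt x 1 with hx1 | hx1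
  · -- case x ≤ 1 : pure power estimate
    rw [barrierV_of_le p hx1, barrierW_of_le p hx1]
    obtain ⟨A, hAdef⟩ : ∃ A:ℝ, A = (x^p)⁻¹ := ⟨_, rfl⟩
    have hA : (1:ℝ) ≤ A := by
      rw [hAdef, le_inv_comm₀ (by norm_num) (by positivity)]
      simpa using pow_le_one₀ hx.le hx1
    have hA0 : (0:ℝ) < A := by rw [hAdef]; positivity
    have hWt : (x^(p+1))⁻¹ * t = A * u := by
      rw [hAdef, htu, pow_succ, mul_inv]
      field_simp
    have hVle : barrierV p (x+t) ≤ ((x+t)^p)⁻¹/p := barrierV_le p (by omega) hxt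
    have hpu : |(p:ℝ)*u| ≤ 1/10 := by
      rw [abs_mul, abs_of_pos hp0]
      calc (p:ℝ) * |u| ≤ (p:ℝ) * (1/(50*(p:ℝ))) := by
            exact mul_le_mul_of_nonneg_left hut hp0.le
      _ = 1/50 := by field_simp
      _ ≤ 1/10 := by norm_num
    have hbern := bernoulli_inv p (u := u) (by linarith) hpu
    have hexp : ((x+t)^p)⁻¹ = A * ((1+u)^p)⁻¹ := by
      rw [hxtu, mul_pow, mul_inv, hAdef]
    have hkey : ((x+t)^p)⁻¹/p ≤ A * (1 - (p:ℝ)*u + 2*((p:ℝ)*u)^2) / p := by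
      rw [hexp]; gcongr
    have heq2 : A * (1 - (p:ℝ)*u + 2*((p:ℝ)*u)^2) / p = A/p - A*u + 2*(p:ℝ)*A*u^2 := by
      field_simp
    rw [heq2] at hkey
    have hfin : 2*(p:ℝ)*A*u^2 ≤ 4*((p:ℝ)+1)*(A*u)^2 := by
      nlinarith [mul_nonneg (mul_nonneg (mul_nonneg hp0.le hA0.le)
          (show (0:ℝ) ≤ 2*A-1 by linarith)) (sq_nonneg u), sq_nonneg (A*u)]
    rw [← hAdef, hWt]
    linarith [hVle, hkey, hfin]
  · -- case 1 < x
    have hxle : ¬ x ≤ 1 := not_le.mpr hx1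
    rw [barrierV_of_gt p hxle, barrierW_of_gt p hxle]
    have hWt : 1/x * t = u := by rw [hu]; ring
    rw [hWt]
    have hlogm : Real.log (x+t) = Real.log x + Real.log (1+u) := by
      rw [hxtu, Real.log_mul (ne_of_gt hx) (ne_of_gt h1u)]
    have hlu : u - Real.log (1+u) ≤ 2*u^2 := log_aux (by linarith [hu100'.1])
    have hpu2 : (0:ℝ) ≤ (p:ℝ)*u^2 := mul_nonneg hp0.le (sq_nonneg u)
    rcases le_or_gt (x+t) 1 with hxt1 | hxt1
    · -- x+t ≤ 1 : crossing down below 1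
      rw [barrierV_of_le p hxt1]
      obtain ⟨ε, hε⟩ : ∃ ε:ℝ, ε = 1 - (x+t) := ⟨_, rfl⟩
      have hε0 : 0 ≤ ε := by rw [hε]; linarith
      have htneg : t < 0 := by linarith
      have hεt : ε ≤ |t| := by
        rw [hε, abs_of_neg htneg]; linarith
      have hx99 : x ≤ 100/99 := by
        have h1 := habs.1
        linarith
      have hpε : (p:ℝ) * ε ≤ 1/10 := by
        have h1 : (p:ℝ) * |t| ≤ x/50 := by
          have := mul_le_mul_of_nonneg_left ht50 hp0.le
          calc (p:ℝ) * |t| ≤ (p:ℝ) * (x/(50*(p:ℝ))) := this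
          _ = x/50 := by field_simp
        have h2 : (p:ℝ) * ε ≤ (p:ℝ) * |t| := mul_le_mul_of_nonneg_left hεt hp0.le
        linarith
      have hphi := phi_bound p (by omega) hxt hxt1 (by rw [← hε]; exact hpε)
      have hεu : ε ≤ |u| * (100/99) := by
        calc ε ≤ |t| := hεt
        _ = |u| * x := by rw [htu, abs_mul, abs_of_pos hx]
        _ ≤ |u| * (100/99) := mul_le_mul_of_nonneg_left hx99 (abs_nonneg u)
      have hεsq : ε^2 ≤ (100/99)^2 * u^2 := by
        nlinarith [abs_nonneg u, sq_abs u, hε0, hεu]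
      have h2p : 2*(p:ℝ)*(1-(x+t))^2 ≤ 2*(p:ℝ)*((100/99)^2*u^2) := by
        rw [← hε]
        exact mul_le_mul_of_nonneg_left hεsq (by positivity)
      rw [hlogm] at hphi
      nlinarith [hphi, hlu, sq_nonneg u, hp2, hpu2, h2p]
    · -- x+t > 1 : staying in the log regime
      rw [barrierV_of_gt p (not_le.mpr hxt1), hlogm]
      nlinarith [hlu, sq_nonneg u, hp2, hpu2]

lemma log_step {x t : ℝ} (hx : 0 < x) (ht : x⁻¹ * |t| ≤ 1/2) :
    0 < x + t ∧ -Real.log (x+t) ≤ -Real.log x - x⁻¹*t + 2*(x⁻¹*t)^2 := by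
  have ht' : |t| ≤ x/2 := by
    have h1 : x * (x⁻¹ * |t|) ≤ x * (1/2) := mul_le_mul_of_nonneg_left ht hx.le
    have h2 : x * (x⁻¹ * |t|) = |t| := by field_simp
    linarith
  have habs := abs_le.mp ht'
  have hxt : 0 < x + t := by linarith
  refine ⟨hxt, ?_⟩
  obtain ⟨u, hu⟩ : ∃ u:ℝ, u = t/x := ⟨_, rfl⟩
  have hxtu : x + t = x*(1+u) := by rw [hu]; field_simp
  have hut : |u| ≤ 1/2 := by
    rw [hu, abs_div, abs_of_pos hx, div_le_iff₀ hx]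
    nlinarith [ht']
  have hut' := abs_le.mp hut
  have h1u : (0:ℝ) < 1+u := by linarith
  have hlog : Real.log (x+t) = Real.log x + Real.log (1+u) := by
    rw [hxtu, Real.log_mul (ne_of_gt hx) (ne_of_gt h1u)]
  have hla := log_aux (u := u) (by linarith)
  have hxu : x⁻¹ * t = u := by rw [hu]; field_simp
  rw [hlog, hxu]
  linarith

set_option maxHeartbeats 2000000 in
/-- single-step progress, Lemma `progress`: taking a step `η·Δ` along an
approximately good min-ratio cycle with `η‖W̃Δ‖₁ = β/(100p)` keeps the flow admissible and
decreases the potential by at least `β²/(10⁴·p)`. -/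
theorem potential_decrease {E Ehat : Type*} [Fintype E] [Fintype Ehat]
    (p : ℕ) (hp : 2 ≤ p) (ℓ : E ⊕ Ehat → ℝ) (δ : E → ℝ) (hδ : ∀ e, 0 ≤ δ e)
    (m Fstar : ℝ) (hm : 1 ≤ m)
    (β : ℝ) (hβ0 : 0 < β) (hβ1 : β < 1)
    (f : E ⊕ Ehat → ℝ)
    (hadm1 : Fstar < ∑ e, ℓ e * f e)
    (hadm2 : ∀ e : E, 0 < f (inl e) + δ e)
    (hadm3 : ∀ e : Ehat, 0 < f (inr e))
    (gt : E ⊕ Ehat → ℝ)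
    (hgt : ∀ e, |gt e - grad p ℓ δ m Fstar f e| ≤ (β / 10) * weight p δ f e)
    (wt : E ⊕ Ehat → ℝ) (hwt0 : ∀ e, 0 < wt e)
    (hwt : ∀ e, (2 : ℝ)⁻¹ * weight p δ f e ≤ wt e ∧ wt e ≤ 2 * weight p δ f e)
    (Δ : E ⊕ Ehat → ℝ) (hΔ : Δ ≠ 0)
    (hgood : ∑ e, gt e * Δ e ≤ -β * ∑ e, wt e * |Δ e|)
    (η : ℝ) (hη : 0 < η)
    (hηnorm : η * ∑ e, wt e * |Δ e| = β / (100 * p))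
    (hstep : Fstar < ∑ e, ℓ e * (f + η • Δ) e) :
    (Fstar < ∑ e, ℓ e * (f + η • Δ) e) ∧
    (∀ e : E, 0 < (f + η • Δ) (inl e) + δ e) ∧
    (∀ e : Ehat, 0 < (f + η • Δ) (inr e)) ∧
    pot p ℓ δ m Fstar (f + η • Δ) ≤ pot p ℓ δ m Fstar f - β ^ 2 / (10 ^ 4 * p) := by
  classical
  have hp2 : (2:ℝ) ≤ (p:ℝ) := by exact_mod_cast hp
  have hp0 : (0:ℝ) < (p:ℝ) := by linarith
  set w := weight p δ f with hwdef
  set T := ∑ e, wt e * |Δ e| with hTdef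
  have hwpos : ∀ e, 0 < w e := by
    intro e
    cases e with
    | inl a =>
        rw [hwdef]; simp only [weight, Sum.elim_inl]
        exact div_pos one_pos (hadm2 a)
    | inr b =>
        rw [hwdef]; simp only [weight, Sum.elim_inr]
        exact barrierW_pos p (hadm3 b)
  have hterm : ∀ e, wt e * |Δ e| ≤ T := fun e =>
    Finset.single_le_sum (fun i _ => mul_nonneg (hwt0 i).le (abs_nonneg _)) (Finset.mem_univ e)
  have hw2 : ∀ e, w e ≤ 2 * wt e := fun e => by linarith [(hwt e).1]
  have hηT : η * T = β / (100*(p:ℝ)) := hηnorm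
  have hsmall : ∀ e, w e * |η * Δ e| ≤ β/(50*(p:ℝ)) := by
    intro e
    have h2 : w e * |Δ e| ≤ 2 * (wt e * |Δ e|) := by
      nlinarith [mul_le_mul_of_nonneg_right (hw2 e) (abs_nonneg (Δ e))]
    calc w e * |η*Δ e| = η * (w e * |Δ e|) := by rw [abs_mul, abs_of_pos hη]; ring
    _ ≤ η * (2 * (wt e * |Δ e|)) := mul_le_mul_of_nonneg_left h2 hη.le
    _ ≤ η * (2 * T) := mul_le_mul_of_nonneg_left (by linarith [hterm e]) hη.le
    _ = 2 * (η * T) := by ring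
    _ = 2 * (β/(100*(p:ℝ))) := by rw [hηT]
    _ = β/(50*(p:ℝ)) := by field_simp; ring
  have hβle1 : β/(50*(p:ℝ)) ≤ 1/(50*(p:ℝ)) := by gcongr <;> linarith
  have hsmall1 : ∀ e, w e * |η * Δ e| ≤ 1/(50*(p:ℝ)) := fun e => le_trans (hsmall e) hβle1
  have hfE : ∀ a : E, (f + η•Δ) (inl a) = f (inl a) + η*Δ (inl a) := by
    intro a; simp [Pi.add_apply, Pi.smul_apply, smul_eq_mul]
  have hfH : ∀ b : Ehat, (f + η•Δ) (inr b) = f (inr b) + η*Δ (inr b) := by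
    intro b; simp [Pi.add_apply, Pi.smul_apply, smul_eq_mul]
  -- per-edge bounds for E edges
  have hE : ∀ a : E, 0 < (f + η•Δ) (inl a) + δ a ∧
      -Real.log ((f+η•Δ) (inl a) + δ a) ≤ -Real.log (f (inl a) + δ a)
        - w (inl a)*(η*Δ (inl a)) + 4*((p:ℝ)+1)*(w (inl a)*(η*Δ (inl a)))^2 := by
    intro a
    have hx := hadm2 a
    have hwa : w (inl a) = (f (inl a) + δ a)⁻¹ := by
      rw [hwdef]; simp only [weight, Sum.elim_inl, one_div]
    have hsm := hsmall1 (inl a)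
    rw [hwa] at hsm
    have hhalf : (f (inl a) + δ a)⁻¹ * |η*Δ (inl a)| ≤ 1/2 := by
      apply le_trans hsm
      rw [div_le_div_iff₀ (by positivity) (by norm_num)]
      linarith
    obtain ⟨h1, h2⟩ := log_step hx hhalf
    have hshift : (f + η•Δ) (inl a) + δ a = (f (inl a) + δ a) + η*Δ (inl a) := by
      rw [hfE a]; ring
    constructor
    · rw [hshift]; exact h1
    · rw [hshift, hwa]
      have h3 : 2*((f (inl a) + δ a)⁻¹*(η*Δ (inl a)))^2
          ≤ 4*((p:ℝ)+1)*((f (inl a) + δ a)⁻¹*(η*Δ (inl a)))^2 := by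
        nlinarith [sq_nonneg ((f (inl a) + δ a)⁻¹*(η*Δ (inl a))), hp2]
      linarith [h2]
  -- per-edge bounds for Ehat edges
  have hH : ∀ b : Ehat, 0 < (f + η•Δ) (inr b) ∧
      barrierV p ((f+η•Δ) (inr b)) ≤ barrierV p (f (inr b))
        - w (inr b)*(η*Δ (inr b)) + 4*((p:ℝ)+1)*(w (inr b)*(η*Δ (inr b)))^2 := by
    intro b
    have hwb : w (inr b) = barrierW p (f (inr b)) := by
      rw [hwdef]; simp only [weight, Sum.elim_inr]
    have hsm := hsmall1 (inr b)
    rw [hwb] at hsm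
    have hbs := barrier_step p hp (hadm3 b) hsm
    rw [hfH b, hwb]
    exact hbs
  refine ⟨hstep, fun a => (hE a).1, fun b => (hH b).1, ?_⟩
  -- now the potential decrease
  obtain ⟨D, hD⟩ : ∃ D:ℝ, D = ∑ e, ℓ e * Δ e := ⟨_, rfl⟩
  set S := (∑ e, ℓ e * f e) - Fstar with hS
  have hSpos : 0 < S := by rw [hS]; linarith
  have hsum' : ∑ e, ℓ e * (f + η•Δ) e = (∑ e, ℓ e * f e) + η * D := by
    rw [hD, Finset.mul_sum, ← Finset.sum_add_distrib]
    apply Finset.sum_congr rfl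
    intro e _
    simp only [Pi.add_apply, Pi.smul_apply, smul_eq_mul]
    ring
  have hS'pos : 0 < S + η * D := by
    rw [hS]; have := hstep; rw [hsum'] at this; linarith
  have hlog : Real.log (S + η*D) ≤ Real.log S + (η*D)/S := by
    have h1 := Real.log_le_sub_one_of_pos (div_pos hS'pos hSpos)
    rw [Real.log_div (ne_of_gt hS'pos) (ne_of_gt hSpos)] at h1
    have h2 : (S+η*D)/S = 1 + (η*D)/S := by field_simp
    linarith [h1, h2.le, h2.ge]
  have hgs : ∑ e, grad p ℓ δ m Fstar f e * Δ e = (10*m/S) * D - ∑ e, w e * Δ e := by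
    rw [hD, Finset.mul_sum, ← Finset.sum_sub_distrib]
    apply Finset.sum_congr rfl
    intro e _
    simp only [grad]
    rw [← hwdef, ← hS]
    ring
  have hgb : ∑ e, grad p ℓ δ m Fstar f e * Δ e ≤ -(4*β/5) * T := by
    have h1 : ∀ e ∈ Finset.univ, grad p ℓ δ m Fstar f e * Δ e
        ≤ gt e * Δ e + (β/10) * (2*(wt e * |Δ e|)) := by
      intro e _
      have h2 : grad p ℓ δ m Fstar f e * Δ e - gt e * Δ e
          ≤ |gt e - grad p ℓ δ m Fstar f e| * |Δ e| := by
        calc grad p ℓ δ m Fstar f e * Δ e - gt e * Δ e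
            = -((gt e - grad p ℓ δ m Fstar f e) * Δ e) := by ring
        _ ≤ |(gt e - grad p ℓ δ m Fstar f e) * Δ e| := neg_le_abs _
        _ = |gt e - grad p ℓ δ m Fstar f e| * |Δ e| := abs_mul _ _
      have h3 := mul_le_mul_of_nonneg_right (hgt e) (abs_nonneg (Δ e))
      have h4 : w e * |Δ e| ≤ 2 * (wt e * |Δ e|) := by
        nlinarith [mul_le_mul_of_nonneg_right (hw2 e) (abs_nonneg (Δ e))]
      nlinarith [mul_le_mul_of_nonneg_left h4 (show (0:ℝ) ≤ β/10 by linarith)]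
    have h5 := Finset.sum_le_sum h1
    rw [Finset.sum_add_distrib] at h5
    have h6 : ∑ e, (β/10) * (2*(wt e * |Δ e|)) = (β/5) * T := by
      rw [hTdef, Finset.mul_sum]
      apply Finset.sum_congr rfl
      intros; ring
    rw [h6] at h5
    linarith [hgood]
  -- sum of squares bound
  have hQ : ∑ e, (w e * (η*Δ e))^2 ≤ (β/(50*(p:ℝ))) * (2*(β/(100*(p:ℝ)))) := by
    have h1 : ∀ e ∈ Finset.univ, (w e * (η*Δ e))^2 ≤ (β/(50*(p:ℝ))) * (w e * |η*Δ e|) := by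
      intro e _
      have ha : 0 ≤ w e * |η*Δ e| := mul_nonneg (hwpos e).le (abs_nonneg _)
      calc (w e * (η*Δ e))^2 = (w e * |η*Δ e|)^2 := by simp [mul_pow, sq_abs]
      _ = (w e * |η*Δ e|) * (w e * |η*Δ e|) := sq (w e * |η*Δ e|)
      _ ≤ (β/(50*(p:ℝ))) * (w e * |η*Δ e|) := mul_le_mul_of_nonneg_right (hsmall e) ha
    have h2 := Finset.sum_le_sum h1
    rw [← Finset.mul_sum] at h2
    have h3 : ∑ e, w e * |η*Δ e| ≤ 2*(β/(100*(p:ℝ))) := by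
      have h4 : ∀ e ∈ Finset.univ, w e * |η*Δ e| ≤ 2*(η * (wt e * |Δ e|)) := by
        intro e _
        have h5 : w e * |η*Δ e| = η * (w e * |Δ e|) := by rw [abs_mul, abs_of_pos hη]; ring
        have h6 : w e * |Δ e| ≤ 2 * (wt e * |Δ e|) := by
          nlinarith [mul_le_mul_of_nonneg_right (hw2 e) (abs_nonneg (Δ e))]
        rw [h5]
        nlinarith [mul_le_mul_of_nonneg_left h6 hη.le]
      have h7 := Finset.sum_le_sum h4
      have h8 : ∑ e, 2*(η * (wt e * |Δ e|)) = 2*(η*T) := by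
        rw [hTdef, Finset.mul_sum, Finset.mul_sum]
      rw [h8, hηT] at h7
      exact h7
    calc ∑ e, (w e * (η*Δ e))^2 ≤ (β/(50*(p:ℝ))) * ∑ e, w e * |η*Δ e| := h2
    _ ≤ (β/(50*(p:ℝ))) * (2*(β/(100*(p:ℝ)))) :=
        mul_le_mul_of_nonneg_left h3 (by positivity)
  -- assemble
  have harg : (∑ e, ℓ e * (f+η•Δ) e) - Fstar = S + η*D := by rw [hsum', hS]; ring
  have hpotf' : pot p ℓ δ m Fstar (f+η•Δ)
      = 10*m*Real.log (S + η*D) - (∑ a:E, Real.log ((f+η•Δ) (inl a) + δ a))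
        + ∑ b:Ehat, barrierV p ((f+η•Δ) (inr b)) := by
    simp only [pot]
    rw [harg]
  have hpotf : pot p ℓ δ m Fstar f
      = 10*m*Real.log S - (∑ a:E, Real.log (f (inl a) + δ a))
        + ∑ b:Ehat, barrierV p (f (inr b)) := by
    simp only [pot]
    rw [hS]
  have hdiffE : ∑ a:E, Real.log (f (inl a)+δ a) - ∑ a:E, Real.log ((f+η•Δ) (inl a)+δ a)
      ≤ ∑ a:E, (-(w (inl a)*(η*Δ (inl a))) + 4*((p:ℝ)+1)*(w (inl a)*(η*Δ (inl a)))^2) := by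
    rw [← Finset.sum_sub_distrib]
    exact Finset.sum_le_sum (fun a _ => by linarith [(hE a).2])
  have hdiffH : ∑ b:Ehat, barrierV p ((f+η•Δ) (inr b)) - ∑ b:Ehat, barrierV p (f (inr b))
      ≤ ∑ b:Ehat, (-(w (inr b)*(η*Δ (inr b))) + 4*((p:ℝ)+1)*(w (inr b)*(η*Δ (inr b)))^2) := by
    rw [← Finset.sum_sub_distrib]
    exact Finset.sum_le_sum (fun b _ => by linarith [(hH b).2])
  have hcombine :
      (∑ a:E, (-(w (inl a)*(η*Δ (inl a))) + 4*((p:ℝ)+1)*(w (inl a)*(η*Δ (inl a)))^2))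
      + (∑ b:Ehat, (-(w (inr b)*(η*Δ (inr b))) + 4*((p:ℝ)+1)*(w (inr b)*(η*Δ (inr b)))^2))
      = -(η * ∑ e, w e * Δ e) + 4*((p:ℝ)+1) * ∑ e, (w e * (η*Δ e))^2 := by
    rw [← Fintype.sum_sum_type (f := fun e => -(w e*(η*Δ e)) + 4*((p:ℝ)+1)*(w e*(η*Δ e))^2)]
    rw [Finset.sum_add_distrib]
    congr 1
    · rw [Finset.sum_neg_distrib, Finset.mul_sum, neg_inj]
      apply Finset.sum_congr rfl
      intros; ring
    · rw [Finset.mul_sum]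
  have h10m : 10*m*Real.log (S + η*D) ≤ 10*m*Real.log S + 10*m*((η*D)/S) := by
    nlinarith [mul_le_mul_of_nonneg_left hlog (show (0:ℝ) ≤ 10*m by linarith)]
  have heq3 : 10*m*((η*D)/S) = η*((10*m/S)*D) := by ring
  have hη_gs : η*((10*m/S)*D) - η*(∑ e, w e * Δ e) = η * ∑ e, grad p ℓ δ m Fstar f e * Δ e := by
    rw [hgs]; ring
  have hη_gb : η * ∑ e, grad p ℓ δ m Fstar f e * Δ e ≤ -(4*β/5) * (β/(100*(p:ℝ))) := by
    have h1 := mul_le_mul_of_nonneg_left hgb hη.le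
    have h2 : η * (-(4*β/5) * T) = -(4*β/5)*(η*T) := by ring
    rw [h2, hηT] at h1
    exact h1
  have hQ4 : 4*((p:ℝ)+1) * ∑ e, (w e * (η*Δ e))^2
      ≤ 4*((p:ℝ)+1) * ((β/(50*(p:ℝ))) * (2*(β/(100*(p:ℝ))))) :=
    mul_le_mul_of_nonneg_left hQ (by positivity)
  have hnum : -(4*β/5) * (β/(100*(p:ℝ))) + 4*((p:ℝ)+1) * ((β/(50*(p:ℝ))) * (2*(β/(100*(p:ℝ)))))
      ≤ -(β^2/(10^4*(p:ℝ))) := by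
    have h1 : -(4*β/5) * (β/(100*(p:ℝ))) + 4*((p:ℝ)+1) * ((β/(50*(p:ℝ))) * (2*(β/(100*(p:ℝ)))))
        = β^2*(16*(p:ℝ)+16-80*(p:ℝ))/(10^4*(p:ℝ)^2) := by
      field_simp
      ring
    have h2 : -(β^2/(10^4*(p:ℝ))) = β^2*(-(p:ℝ))/(10^4*(p:ℝ)^2) := by
      field_simp
    rw [h1, h2]
    gcongr ?_ / _
    nlinarith [sq_nonneg β, hp2, hβ0]
  rw [hpotf', hpotf]
  linarith [hdiffE, hdiffH, hcombine, h10m, heq3, hη_gs, hη_gb, hQ4, hnum]
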